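/- Let I be a set, F a filter on I, and (X_j)_{j∈J} a family of topological spaces each satisfying the F-accumulation property. Then the Tychonoff product ∏_{j∈J} X_j satisfies the F-accumulation property. -/

import Mathlib

/-- `z` is an `E`-accumulation point of the `I`-indexed sequence `x`. -/
def IsAccPt {I X : Type*} [TopologicalSpace X] (E : Set (Set I)) (x : I → X) (z : X) : Prop :=
  ∀ U : Set X, IsOpen U → z ∈ U → {i | x i ∈ U} ∈ E

/-- `X` satisfies the `E`-accumulation property. -/
def AccProp {I : Type*} (X : Type*) [TopologicalSpace X] (E : Set (Set I)) : Prop :=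
  ∀ x : I → X, ∃ z : X, IsAccPt E x z

/-- A filter in the classical sense: a nonempty proper family closed under
finite intersections and supersets. -/
structure IsSetFilter {I : Type*} (F : Set (Set I)) : Prop where
  nonempty : F.Nonempty
  proper : (∅ : Set I) ∉ F
  inter : ∀ A ∈ F, ∀ B ∈ F, A ∩ B ∈ F
  mono : ∀ A ∈ F, ∀ B : Set I, A ⊆ B → B ∈ F

theorem stmt3 {I J : Type*} (F : Set (Set I)) (hF : IsSetFilter F) (X : J → Type*)
    [∀ j, TopologicalSpace (X j)] (h : ∀ j, AccProp (X j) F) :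
    AccProp (∀ j, X j) F := by
  have huniv : (Set.univ : Set I) ∈ F := by
    obtain ⟨A, hA⟩ := hF.nonempty
    exact hF.mono A hA _ (Set.subset_univ A)
  intro x
  choose z hz using fun j => h j (fun i => x i j)
  refine ⟨z, ?_⟩
  intro U hU hzU
  obtain ⟨t, u, hu, hsub⟩ := isOpen_pi_iff.mp hU z hzU
  have key : ∀ s : Finset J, (∀ j ∈ s, IsOpen (u j) ∧ z j ∈ u j) →
      {i | ∀ j ∈ s, x i j ∈ u j} ∈ F := by
    classical
    intro s
    induction s using Finset.induction_on with
    | empty => intro _; simpa using huniv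
    | insert a s ha ih =>
      intro hu
      have h1 : {i | x i a ∈ u a} ∈ F :=
        hz a (u a) (hu a (Finset.mem_insert_self a s)).1 (hu a (Finset.mem_insert_self a s)).2
      have h2 : {i | ∀ j ∈ s, x i j ∈ u j} ∈ F :=
        ih fun j hj => hu j (Finset.mem_insert_of_mem hj)
      refine hF.mono _ (hF.inter _ h1 _ h2) _ ?_
      intro i hi
      simp only [Set.mem_inter_iff, Set.mem_setOf_eq] at hi ⊢
      intro j hj
      rcases Finset.mem_insert.mp hj with rfl | hj
      · exact hi.1
      · exact hi.2 j hj
  refine hF.mono _ (key t hu) _ ?_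
  intro i hi
  exact hsub fun j hj => hi j hj
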